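/- If n is an even positive integer and f(n) is even, then f(f(n)) = n/2 − 1. -/

import Mathlib

/-- The map `f(n) = ⌊n/√2⌋` if `n` is even and `f(n) = ⌊n·√2⌋` if `n` is odd. -/
noncomputable def f (n : ℕ) : ℕ :=
  if Even n then ⌊(n : ℝ) / Real.sqrt 2⌋₊ else ⌊(n : ℝ) * Real.sqrt 2⌋₊

/-- If `n` is an even positive integer and `f(n)` is even, then `f(f(n)) = n/2 - 1`. -/
theorem f_f_even_even (n : ℕ) (hn : 0 < n) (hne : Even n) (hfe : Even (f n)) :
    f (f n) = n / 2 - 1 := by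
  obtain ⟨k, hk⟩ := hne
  have hk' : n = 2 * k := by omega
  have hkpos : 0 < k := by omega
  have hs2 : (0:ℝ) < Real.sqrt 2 := by positivity
  have hs1 : (1:ℝ) < Real.sqrt 2 := by
    nlinarith [Real.sq_sqrt (by norm_num : (2:ℝ) ≥ 0), Real.sqrt_nonneg 2]
  have hirr : Irrational ((n:ℝ) / Real.sqrt 2) := by
    have h1 : Irrational (Real.sqrt 2)⁻¹ := irrational_sqrt_two.inv
    have h2 := h1.natCast_mul (show (n:ℕ) ≠ 0 by omega)
    simpa [div_eq_mul_inv] using h2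
  set x : ℝ := (n:ℝ) / Real.sqrt 2 with hx
  set m : ℕ := ⌊x⌋₊ with hm
  have hxpos : 0 < x := by positivity
  have hle : (m:ℝ) ≤ x := Nat.floor_le hxpos.le
  have hlt : (m:ℝ) < x := lt_of_le_of_ne hle (by
    intro h; exact hirr ⟨(m:ℚ), by push_cast; exact h⟩)
  have hub : x < (m:ℝ) + 1 := Nat.lt_floor_add_one x
  -- m/√2 bounds
  have hdiv2 : x / Real.sqrt 2 = (n:ℝ) / 2 := by
    rw [hx, div_div, Real.mul_self_sqrt (by norm_num)]
  have hupper : (m:ℝ) / Real.sqrt 2 < (k:ℝ) := by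
    have h := (div_lt_div_iff_of_pos_right hs2).mpr hlt
    rw [hdiv2, hk'] at h
    push_cast at h
    linarith
  have hlower : (k:ℝ) - 1 < (m:ℝ) / Real.sqrt 2 := by
    have h := (div_lt_div_iff_of_pos_right hs2).mpr hub
    rw [hdiv2, hk'] at h
    have h1 : ((m:ℝ) + 1) / Real.sqrt 2 < (m:ℝ) / Real.sqrt 2 + 1 := by
      rw [add_div]
      have : 1 / Real.sqrt 2 < 1 := by
        rw [div_lt_one hs2]; exact hs1
      linarith
    push_cast at h
    linarith
  have hfn : f n = m := by
    rw [hm, hx]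
    have hev : Even n := ⟨k, hk⟩
    simp [f, hev]
  have hffn : f (f n) = ⌊(m:ℝ) / Real.sqrt 2⌋₊ := by
    rw [hfn] at hfe ⊢
    simp only [f, if_pos hfe]
  rw [hffn, hk']
  have : 2 * k / 2 - 1 = k - 1 := by omega
  rw [this]
  rw [Nat.floor_eq_iff (by positivity)]
  have hc : ((k - 1 : ℕ) : ℝ) = (k:ℝ) - 1 := by
    have : 1 ≤ k := hkpos
    push_cast [this]; ring
  rw [hc]
  constructor
  · linarith
  · linarith
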